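/- For all quaternions α, β ∈ ℍ, viewed as column vectors in ℝ⁴ via the identification ℍ ≅ ℝ⁴, one has 4(αβ^T - βα^T) = L_{αβ̄ - βᾱ} - R_{ᾱβ - β̄α}, as linear endomorphisms of ℍ ≅ ℝ⁴. -/

import Mathlib

open Quaternion
open scoped Quaternion RealInnerProductSpace

/-- For all quaternions `α, β ∈ ℍ`, viewed as column vectors of `ℝ⁴` via `ℍ ≅ ℝ⁴`,
one has `4(αβᵀ - βαᵀ) = L_{αβ̄ - βᾱ} - R_{ᾱβ - β̄α}` as linear endomorphisms of `ℍ`;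
here `(αβᵀ)x = ⟪β, x⟫ • α` and `L_p x = p x`, `R_p x = x p`. -/
theorem four_rank_one_skew_eq_left_sub_right (α β x : ℍ[ℝ]) :
    (4 : ℝ) • (⟪β, x⟫ • α - ⟪α, x⟫ • β) =
      (α * star β - β * star α) * x - x * (star α * β - star β * α) := by
  simp only [Quaternion.inner_def]
  ext <;> simp [Quaternion.re_mul, Quaternion.imI_mul, Quaternion.imJ_mul, Quaternion.imK_mul] <;> ring
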